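/- For every n ≥ 2, the number of equilateral triangles with vertices in {0,...,n}³ satisfies ET(n) ≥ 8(2n−1)(n² − n + 1). -/

import Mathlib

/-- Squared Euclidean distance between two points of `ℤ³`. -/
def d2 (P Q : ℤ × ℤ × ℤ) : ℤ :=
  (P.1 - Q.1) ^ 2 + (P.2.1 - Q.2.1) ^ 2 + (P.2.2 - Q.2.2) ^ 2

/-- `T` is an equilateral triangle: a 3-element set with all pairwise
(squared) distances equal. -/
def IsEqTri (T : Finset (ℤ × ℤ × ℤ)) : Prop :=
  T.card = 3 ∧
  ∀ p ∈ T, ∀ q ∈ T, ∀ r ∈ T, ∀ s ∈ T, p ≠ q → r ≠ s → d2 p q = d2 r s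

/-- Membership of a point in the grid `{0,…,n}³`. -/
def InGrid (n : ℕ) (p : ℤ × ℤ × ℤ) : Prop :=
  p.1 ∈ Set.Icc 0 (n : ℤ) ∧ p.2.1 ∈ Set.Icc 0 (n : ℤ) ∧ p.2.2 ∈ Set.Icc 0 (n : ℤ)

/-- The number of equilateral triangles with vertices in `{0,…,n}³`. -/
noncomputable def ET (n : ℕ) : ℕ :=
  {T : Finset (ℤ × ℤ × ℤ) | IsEqTri T ∧ ∀ p ∈ T, InGrid n p}.ncard

lemma d2_comm (p q : ℤ × ℤ × ℤ) : d2 p q = d2 q p := by simp only [d2]; ring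

lemma pairs_eq (A B C : ℤ×ℤ×ℤ) (s : ℤ) (hAB : d2 A B = s) (hAC : d2 A C = s)
    (hBC : d2 B C = s) :
    ∀ p ∈ ({A,B,C} : Finset (ℤ×ℤ×ℤ)), ∀ q ∈ ({A,B,C} : Finset (ℤ×ℤ×ℤ)),
      p ≠ q → d2 p q = s := by
  intro p hp q hq hpq
  simp only [Finset.mem_insert, Finset.mem_singleton] at hp hq
  rcases hp with rfl|rfl|rfl <;> rcases hq with rfl|rfl|rfl <;>
    first
      | exact absurd rfl hpq
      | assumption
      | (rw [d2_comm]; assumption)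

lemma isEqTri_mk (A B C : ℤ×ℤ×ℤ) (s : ℤ) (hAB' : A ≠ B) (hAC' : A ≠ C) (hBC' : B ≠ C)
    (hAB : d2 A B = s) (hAC : d2 A C = s) (hBC : d2 B C = s) :
    IsEqTri {A,B,C} := by
  constructor
  · rw [Finset.card_insert_of_notMem (by simp [hAB', hAC']),
      Finset.card_insert_of_notMem (by simp [hBC'])]
    simp
  · intro p hp q hq r hr u hu hpq hru
    rw [pairs_eq A B C s hAB hAC hBC p hp q hq hpq,
      pairs_eq A B C s hAB hAC hBC r hr u hu hru]

lemma sum3 {A B C : ℤ×ℤ×ℤ} (f : ℤ×ℤ×ℤ → ℤ) (hAB : A≠B) (hAC : A≠C) (hBC : B≠C) :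
    ∑ p ∈ ({A,B,C} : Finset (ℤ×ℤ×ℤ)), f p = f A + f B + f C := by
  rw [Finset.sum_insert (by simp [hAB,hAC]), Finset.sum_insert (by simp [hBC]),
    Finset.sum_singleton]
  ring

def tri1 (e t : ℤ×ℤ×ℤ) : Finset (ℤ×ℤ×ℤ) :=
  {(t.1 + 1 - e.1, t.2.1 + e.2.1, t.2.2 + e.2.2),
   (t.1 + e.1, t.2.1 + 1 - e.2.1, t.2.2 + e.2.2),
   (t.1 + e.1, t.2.1 + e.2.1, t.2.2 + 1 - e.2.2)}

def tri2 (e t : ℤ×ℤ×ℤ) : Finset (ℤ×ℤ×ℤ) :=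
  {(t.1 + 1, t.2.1 + 2*e.2.1, t.2.2 + 2 - 2*e.2.2),
   (t.1 + 2 - 2*e.1, t.2.1 + 1, t.2.2 + 2*e.2.2),
   (t.1 + 2*e.1, t.2.1 + 2 - 2*e.2.1, t.2.2 + 1)}

def cube : Finset (ℤ×ℤ×ℤ) := ({0,1} : Finset ℤ) ×ˢ ({0,1} : Finset ℤ) ×ˢ ({0,1} : Finset ℤ)

noncomputable def box (m : ℤ) : Finset (ℤ×ℤ×ℤ) := Finset.Icc 0 m ×ˢ Finset.Icc 0 m ×ˢ Finset.Icc 0 m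

lemma mem_cube {e : ℤ×ℤ×ℤ} (he : e ∈ cube) :
    (e.1 = 0 ∨ e.1 = 1) ∧ (e.2.1 = 0 ∨ e.2.1 = 1) ∧ (e.2.2 = 0 ∨ e.2.2 = 1) := by
  simpa [cube, Finset.mem_product] using he

lemma mem_box {m : ℤ} {t : ℤ×ℤ×ℤ} (ht : t ∈ box m) :
    (0 ≤ t.1 ∧ t.1 ≤ m) ∧ (0 ≤ t.2.1 ∧ t.2.1 ≤ m) ∧ (0 ≤ t.2.2 ∧ t.2.2 ≤ m) := by
  simpa [box, Finset.mem_product, Finset.mem_Icc] using ht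

lemma tri1_eqtri {e : ℤ×ℤ×ℤ} (t : ℤ×ℤ×ℤ) (he : e ∈ cube) : IsEqTri (tri1 e t) := by
  obtain ⟨h1, h2, h3⟩ := mem_cube he
  rw [tri1]
  refine isEqTri_mk _ _ _ 2 ?_ ?_ ?_ ?_ ?_ ?_ <;>
    first
      | (simp only [ne_eq, Prod.mk.injEq, not_and]; intros; omega)
      | (rcases h1 with h1|h1 <;> rcases h2 with h2|h2 <;> rcases h3 with h3|h3 <;>
          (rw [h1, h2, h3]) <;> (simp only [d2]; ring_nf))

lemma tri2_d2 {e : ℤ×ℤ×ℤ} (t : ℤ×ℤ×ℤ) (he : e ∈ cube) :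
    d2 (t.1 + 1, t.2.1 + 2*e.2.1, t.2.2 + 2 - 2*e.2.2)
       (t.1 + 2 - 2*e.1, t.2.1 + 1, t.2.2 + 2*e.2.2) = 6 ∧
    d2 (t.1 + 1, t.2.1 + 2*e.2.1, t.2.2 + 2 - 2*e.2.2)
       (t.1 + 2*e.1, t.2.1 + 2 - 2*e.2.1, t.2.2 + 1) = 6 ∧
    d2 (t.1 + 2 - 2*e.1, t.2.1 + 1, t.2.2 + 2*e.2.2)
       (t.1 + 2*e.1, t.2.1 + 2 - 2*e.2.1, t.2.2 + 1) = 6 := by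
  obtain ⟨h1, h2, h3⟩ := mem_cube he
  refine ⟨?_, ?_, ?_⟩ <;>
    rcases h1 with h1|h1 <;> rcases h2 with h2|h2 <;> rcases h3 with h3|h3 <;>
      (rw [h1, h2, h3]) <;> (simp only [d2]; ring_nf)

lemma tri2_eqtri {e : ℤ×ℤ×ℤ} (t : ℤ×ℤ×ℤ) (he : e ∈ cube) : IsEqTri (tri2 e t) := by
  obtain ⟨hab, hac, hbc⟩ := tri2_d2 t he
  rw [tri2]
  refine isEqTri_mk _ _ _ 6 ?_ ?_ ?_ hab hac hbc <;>
    (simp only [ne_eq, Prod.mk.injEq, not_and]; intros; omega)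

lemma tri2_side {e : ℤ×ℤ×ℤ} (t : ℤ×ℤ×ℤ) (he : e ∈ cube) :
    ∀ p ∈ tri2 e t, ∀ q ∈ tri2 e t, p ≠ q → d2 p q = 6 := by
  obtain ⟨hab, hac, hbc⟩ := tri2_d2 t he
  rw [tri2]
  exact pairs_eq _ _ _ 6 hab hac hbc

lemma tri1_sums (e t : ℤ×ℤ×ℤ) :
    (∑ p ∈ tri1 e t, p.1) = 3*t.1 + 1 + e.1 ∧
    (∑ p ∈ tri1 e t, p.2.1) = 3*t.2.1 + 1 + e.2.1 ∧
    (∑ p ∈ tri1 e t, p.2.2) = 3*t.2.2 + 1 + e.2.2 := by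
  rw [tri1]
  refine ⟨?_, ?_, ?_⟩ <;>
    rw [sum3 _ (by simp only [ne_eq, Prod.mk.injEq, not_and]; intros; omega)
      (by simp only [ne_eq, Prod.mk.injEq, not_and]; intros; omega)
      (by simp only [ne_eq, Prod.mk.injEq, not_and]; intros; omega)] <;> ring

lemma tri2_sums (e t : ℤ×ℤ×ℤ) :
    (∑ p ∈ tri2 e t, p.1) = 3*t.1 + 3 ∧
    (∑ p ∈ tri2 e t, p.2.1) = 3*t.2.1 + 3 ∧
    (∑ p ∈ tri2 e t, p.2.2) = 3*t.2.2 + 3 := by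
  rw [tri2]
  refine ⟨?_, ?_, ?_⟩ <;>
    rw [sum3 _ (by simp only [ne_eq, Prod.mk.injEq, not_and]; intros; omega)
      (by simp only [ne_eq, Prod.mk.injEq, not_and]; intros; omega)
      (by simp only [ne_eq, Prod.mk.injEq, not_and]; intros; omega)] <;> ring

lemma tri1_inj {e e' t t' : ℤ×ℤ×ℤ} (he : e ∈ cube) (he' : e' ∈ cube)
    (h : tri1 e t = tri1 e' t') : e = e' ∧ t = t' := by
  obtain ⟨a1, a2, a3⟩ := tri1_sums e t
  obtain ⟨b1, b2, b3⟩ := tri1_sums e' t'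
  rw [h] at a1 a2 a3
  obtain ⟨h1, h2, h3⟩ := mem_cube he
  obtain ⟨g1, g2, g3⟩ := mem_cube he'
  constructor <;> (apply Prod.ext ?_ (Prod.ext ?_ ?_)) <;> omega

lemma tri2_inj {e e' t t' : ℤ×ℤ×ℤ} (he : e ∈ cube) (he' : e' ∈ cube)
    (h : tri2 e t = tri2 e' t') : e = e' ∧ t = t' := by
  obtain ⟨a1, a2, a3⟩ := tri2_sums e t
  obtain ⟨b1, b2, b3⟩ := tri2_sums e' t'
  rw [h] at a1 a2 a3
  have ht : t = t' := by apply Prod.ext ?_ (Prod.ext ?_ ?_) <;> omega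
  subst ht
  have hA : (t.1 + 1, t.2.1 + 2*e.2.1, t.2.2 + 2 - 2*e.2.2) ∈ tri2 e' t := by
    rw [← h, tri2]; simp
  have hB : (t.1 + 2 - 2*e.1, t.2.1 + 1, t.2.2 + 2*e.2.2) ∈ tri2 e' t := by
    rw [← h, tri2]; simp
  rw [tri2] at hA hB
  simp only [Finset.mem_insert, Finset.mem_singleton, Prod.mk.injEq] at hA hB
  obtain ⟨h1, h2, h3⟩ := mem_cube he
  obtain ⟨g1, g2, g3⟩ := mem_cube he'
  refine ⟨Prod.ext ?_ (Prod.ext ?_ ?_), rfl⟩ <;> omega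

lemma tri12_ne {e e' t t' : ℤ×ℤ×ℤ} (he : e ∈ cube) (he' : e' ∈ cube) :
    tri1 e t ≠ tri2 e' t' := by
  intro h
  have hA : (t.1 + 1 - e.1, t.2.1 + e.2.1, t.2.2 + e.2.2) ∈ tri2 e' t' := by
    rw [← h, tri1]; simp
  have hB : (t.1 + e.1, t.2.1 + 1 - e.2.1, t.2.2 + e.2.2) ∈ tri2 e' t' := by
    rw [← h, tri1]; simp
  have hne : (t.1 + 1 - e.1, t.2.1 + e.2.1, t.2.2 + e.2.2)
      ≠ (t.1 + e.1, t.2.1 + 1 - e.2.1, t.2.2 + e.2.2) := by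
    simp only [ne_eq, Prod.mk.injEq, not_and]; intros; omega
  have h6 := tri2_side t' he' _ hA _ hB hne
  have h2 : d2 (t.1 + 1 - e.1, t.2.1 + e.2.1, t.2.2 + e.2.2)
      (t.1 + e.1, t.2.1 + 1 - e.2.1, t.2.2 + e.2.2) = 2 := by
    obtain ⟨h1', h2', h3'⟩ := mem_cube he
    rcases h1' with h1'|h1' <;> rcases h2' with h2'|h2' <;>
      (rw [h1', h2']) <;> (simp only [d2]; ring_nf)
  omega

lemma tri1_grid {n : ℕ} {e t : ℤ×ℤ×ℤ} (he : e ∈ cube) (ht : t ∈ box ((n:ℤ)-1)) :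
    ∀ p ∈ tri1 e t, InGrid n p := by
  obtain ⟨h1, h2, h3⟩ := mem_cube he
  obtain ⟨g1, g2, g3⟩ := mem_box ht
  intro p hp
  rw [tri1] at hp
  simp only [Finset.mem_insert, Finset.mem_singleton] at hp
  rcases hp with rfl|rfl|rfl <;>
    (simp only [InGrid, Set.mem_Icc]; omega)

lemma tri2_grid {n : ℕ} {e t : ℤ×ℤ×ℤ} (he : e ∈ cube) (ht : t ∈ box ((n:ℤ)-2)) :
    ∀ p ∈ tri2 e t, InGrid n p := by
  obtain ⟨h1, h2, h3⟩ := mem_cube he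
  obtain ⟨g1, g2, g3⟩ := mem_box ht
  intro p hp
  rw [tri2] at hp
  simp only [Finset.mem_insert, Finset.mem_singleton] at hp
  rcases hp with rfl|rfl|rfl <;>
    (simp only [InGrid, Set.mem_Icc]; omega)

lemma card_box {k : ℕ} (hk : 1 ≤ k) : (box ((k:ℤ) - 1)).card = k * (k * k) := by
  have h : (Finset.Icc (0:ℤ) ((k:ℤ)-1)).card = k := by
    rw [Int.card_Icc]
    omega
  rw [box, Finset.card_product, Finset.card_product, h]

lemma card_cube : cube.card = 8 := by decide

theorem ET_lower_bound (n : ℕ) (hn : 2 ≤ n) :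
    8 * (2 * n - 1) * (n ^ 2 - n + 1) ≤ ET n := by
  classical
  set S : Set (Finset (ℤ × ℤ × ℤ)) :=
    {T : Finset (ℤ × ℤ × ℤ) | IsEqTri T ∧ ∀ p ∈ T, InGrid n p} with hS
  have hET : ET n = S.ncard := rfl
  -- the two families
  set D1 : Finset ((ℤ×ℤ×ℤ) × (ℤ×ℤ×ℤ)) := cube ×ˢ box ((n:ℤ) - 1) with hD1
  set D2 : Finset ((ℤ×ℤ×ℤ) × (ℤ×ℤ×ℤ)) := cube ×ˢ box ((n:ℤ) - 2) with hD2
  set S1 : Finset (Finset (ℤ×ℤ×ℤ)) := D1.image (fun x => tri1 x.1 x.2) with hS1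
  set S2 : Finset (Finset (ℤ×ℤ×ℤ)) := D2.image (fun x => tri2 x.1 x.2) with hS2
  have hmem1 : ∀ x ∈ D1, x.1 ∈ cube ∧ x.2 ∈ box ((n:ℤ)-1) := by
    intro x hx; rwa [hD1, Finset.mem_product] at hx
  have hmem2 : ∀ x ∈ D2, x.1 ∈ cube ∧ x.2 ∈ box ((n:ℤ)-2) := by
    intro x hx; rwa [hD2, Finset.mem_product] at hx
  -- cardinalities
  have hc1 : S1.card = 8 * (n * (n * n)) := by
    rw [hS1, Finset.card_image_of_injOn, hD1, Finset.card_product, card_cube,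
      card_box (by omega)]
    intro x hx y hy hxy
    obtain ⟨hxc, _⟩ := hmem1 x hx
    obtain ⟨hyc, _⟩ := hmem1 y hy
    obtain ⟨h1, h2⟩ := tri1_inj hxc hyc hxy
    exact Prod.ext h1 h2
  have hc2 : S2.card = 8 * ((n-1) * ((n-1) * (n-1))) := by
    have : ((n:ℤ) - 2) = ((n-1 : ℕ) : ℤ) - 1 := by omega
    rw [hS2, Finset.card_image_of_injOn, hD2, Finset.card_product, card_cube, this,
      card_box (by omega)]
    intro x hx y hy hxy
    obtain ⟨hxc, _⟩ := hmem2 x hx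
    obtain ⟨hyc, _⟩ := hmem2 y hy
    obtain ⟨h1, h2⟩ := tri2_inj hxc hyc hxy
    exact Prod.ext h1 h2
  -- disjointness
  have hdisj : Disjoint S1 S2 := by
    rw [Finset.disjoint_left]
    intro T hT1 hT2
    rw [hS1, Finset.mem_image] at hT1
    rw [hS2, Finset.mem_image] at hT2
    obtain ⟨x, hx, rfl⟩ := hT1
    obtain ⟨y, hy, hxy⟩ := hT2
    exact tri12_ne (hmem1 x hx).1 (hmem2 y hy).1 hxy.symm
  -- union is inside S
  have hsub : ((S1 ∪ S2 : Finset (Finset (ℤ×ℤ×ℤ))) : Set (Finset (ℤ×ℤ×ℤ))) ⊆ S := by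
    intro T hT
    simp only [Finset.coe_union, Set.mem_union, Finset.mem_coe] at hT
    rcases hT with hT | hT
    · rw [hS1, Finset.mem_image] at hT
      obtain ⟨x, hx, rfl⟩ := hT
      obtain ⟨hxc, hxb⟩ := hmem1 x hx
      exact ⟨tri1_eqtri x.2 hxc, tri1_grid hxc hxb⟩
    · rw [hS2, Finset.mem_image] at hT
      obtain ⟨x, hx, rfl⟩ := hT
      obtain ⟨hxc, hxb⟩ := hmem2 x hx
      exact ⟨tri2_eqtri x.2 hxc, tri2_grid hxc hxb⟩
  -- S is finite
  have hfin : S.Finite := by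
    apply Set.Finite.subset ((box (n:ℤ)).powerset : Finset (Finset (ℤ×ℤ×ℤ))).finite_toSet
    intro T hT
    simp only [Finset.coe_powerset, Set.mem_preimage, Set.mem_powerset_iff, Finset.coe_subset,
      Finset.mem_coe, Finset.mem_powerset]
    intro p hp
    have := hT.2 p hp
    obtain ⟨h1, h2, h3⟩ := this
    rw [Set.mem_Icc] at h1 h2 h3
    rw [box, Finset.mem_product, Finset.mem_product]
    exact ⟨Finset.mem_Icc.2 h1, Finset.mem_Icc.2 h2, Finset.mem_Icc.2 h3⟩
  -- put it together
  have hcard : (S1 ∪ S2).card = 8 * (n * (n * n)) + 8 * ((n-1) * ((n-1) * (n-1))) := by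
    rw [Finset.card_union_of_disjoint hdisj, hc1, hc2]
  have hle : (S1 ∪ S2).card ≤ S.ncard := by
    rw [← Set.ncard_coe_finset]
    exact Set.ncard_le_ncard hsub hfin
  have harith : 8 * (2 * n - 1) * (n ^ 2 - n + 1)
      = 8 * (n * (n * n)) + 8 * ((n-1) * ((n-1) * (n-1))) := by
    obtain ⟨m, rfl⟩ : ∃ m, n = m + 2 := ⟨n - 2, by omega⟩
    have e1 : 2 * (m+2) - 1 = 2*m + 3 := by omega
    have e2 : (m+2) ^ 2 - (m+2) + 1 = m*m + 3*m + 3 := by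
      have : (m+2)^2 = m*m + (4*m + 4) := by ring
      rw [this]
      generalize m*m = k
      omega
    have e3 : m + 2 - 1 = m + 1 := by omega
    rw [e1, e2, e3]
    ring
  rw [hET, harith]
  exact le_trans (le_of_eq hcard.symm) hle
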